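/- Let v > 0, a ∈ ℝ, b > 0, and define f : (0,∞) → ℝ by f(γ) = (a − 3/2)·log γ − v/(2γ) − (a+b)·log(1+γ). Set γ* = ((v+2a−3) + √((v+2a−3)² + 4(3+2b)v)) / (2(3+2b)). Then γ* > 0, f′(γ) > 0 for 0 < γ < γ*, f′(γ*) = 0, and f′(γ) < 0 for γ > γ*; consequently f attains its maximum on (0,∞) at the unique point γ*. -/

import Mathlib

/-- The per-coordinate M-step objective in the EM algorithm with the
Generalized Beta Mixture prior, with `v = ⟨w²⟩`. -/
noncomputable def f (v a b γ : ℝ) : ℝ :=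
  (a - 3/2) * Real.log γ - v / (2 * γ) - (a + b) * Real.log (1 + γ)

lemma f_hasDerivAt (v a b : ℝ) {γ : ℝ} (hγ : 0 < γ) :
    HasDerivAt (f v a b)
      ((-(3 + 2*b)*γ^2 + (v + 2*a - 3)*γ + v) / (2*γ^2*(1+γ))) γ := by
  have h1γ : (0:ℝ) < 1 + γ := by linarith
  have hlog : HasDerivAt Real.log γ⁻¹ γ := Real.hasDerivAt_log hγ.ne'
  have hlog2 : HasDerivAt (fun x : ℝ => Real.log (1 + x)) ((1+γ)⁻¹) γ := by
    have h : HasDerivAt (fun x : ℝ => 1 + x) 1 γ := (hasDerivAt_id γ).const_add 1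
    simpa using h.log h1γ.ne'
  have hinv : HasDerivAt (fun x : ℝ => v / (2 * x)) (-(v / (2 * γ^2))) γ := by
    have h : HasDerivAt (fun x : ℝ => x⁻¹) (-(γ^2)⁻¹) γ := hasDerivAt_inv hγ.ne'
    have h2 := h.const_mul (v/2)
    have heq : (fun x : ℝ => v / (2 * x)) = fun x : ℝ => (v/2) * x⁻¹ := by
      funext x; rw [div_eq_mul_inv, mul_inv]; ring
    rw [heq]
    refine h2.congr_deriv ?_
    field_simp
  have H := ((hlog.const_mul (a - 3/2)).sub hinv).sub (hlog2.const_mul (a+b))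
  have hfun : f v a b = fun x : ℝ =>
      (a - 3/2) * Real.log x - v / (2*x) - (a+b) * Real.log (1+x) := rfl
  rw [hfun]
  refine H.congr_deriv ?_
  field_simp
  ring

/-- The EM update rule: `f` attains its maximum on `(0,∞)` at the unique point `γ*`. -/
theorem em_update_gamma (v a b : ℝ) (hv : 0 < v) (hb : 0 < b) :
    0 < ((v + 2*a - 3) + Real.sqrt ((v + 2*a - 3)^2 + 4*(3 + 2*b)*v)) / (2*(3 + 2*b)) ∧
    (∀ γ : ℝ, 0 < γ →
      γ < ((v + 2*a - 3) + Real.sqrt ((v + 2*a - 3)^2 + 4*(3 + 2*b)*v)) / (2*(3 + 2*b)) →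
      0 < deriv (f v a b) γ) ∧
    deriv (f v a b)
      (((v + 2*a - 3) + Real.sqrt ((v + 2*a - 3)^2 + 4*(3 + 2*b)*v)) / (2*(3 + 2*b))) = 0 ∧
    (∀ γ : ℝ,
      ((v + 2*a - 3) + Real.sqrt ((v + 2*a - 3)^2 + 4*(3 + 2*b)*v)) / (2*(3 + 2*b)) < γ →
      deriv (f v a b) γ < 0) ∧
    (∀ γ : ℝ, 0 < γ →
      γ ≠ ((v + 2*a - 3) + Real.sqrt ((v + 2*a - 3)^2 + 4*(3 + 2*b)*v)) / (2*(3 + 2*b)) →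
      f v a b γ <
        f v a b (((v + 2*a - 3) + Real.sqrt ((v + 2*a - 3)^2 + 4*(3 + 2*b)*v)) / (2*(3 + 2*b)))) := by
  set s : ℝ := v + 2*a - 3 with hs
  set c : ℝ := 3 + 2*b with hcdef
  have hc0 : 0 < c := by simp [hcdef]; linarith
  set r : ℝ := Real.sqrt (s^2 + 4*c*v) with hrdef
  set g : ℝ := (s + r) / (2*c) with hgdef
  have hr2 : r^2 = s^2 + 4*c*v := Real.sq_sqrt (by positivity)
  have hr0 : 0 ≤ r := Real.sqrt_nonneg _
  have hcv : 0 < 4*c*v := by positivity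
  have hrs : s < r := by nlinarith
  have hg0 : 0 < g := by
    apply div_pos _ (by linarith)
    nlinarith
  have hcg : 2*c*g = s + r := by
    rw [hgdef]; field_simp
  have hroot : c * g^2 = s * g + v := by
    rw [hgdef]; field_simp; nlinarith
  have hfactor : ∀ γ : ℝ, -c*γ^2 + s*γ + v = (g - γ) * (c*(γ+g) - s) := by
    intro γ; nlinarith [hroot]
  have hlin : ∀ γ : ℝ, 0 < γ → 0 < c*(γ+g) - s := by
    intro γ hγ
    have := mul_pos hc0 hγ
    nlinarith
  have hderiv : ∀ γ : ℝ, 0 < γ →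
      deriv (f v a b) γ = (-c*γ^2 + s*γ + v) / (2*γ^2*(1+γ)) := by
    intro γ hγ
    exact (f_hasDerivAt v a b hγ).deriv
  have hden : ∀ γ : ℝ, 0 < γ → 0 < 2*γ^2*(1+γ) := by
    intro γ hγ; positivity
  have hsign_pos : ∀ γ : ℝ, 0 < γ → γ < g → 0 < deriv (f v a b) γ := by
    intro γ hγ hγg
    rw [hderiv γ hγ, hfactor γ]
    exact div_pos (mul_pos (by linarith) (hlin γ hγ)) (hden γ hγ)
  have hsign_neg : ∀ γ : ℝ, g < γ → deriv (f v a b) γ < 0 := by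
    intro γ hγg
    have hγ : 0 < γ := lt_trans hg0 hγg
    rw [hderiv γ hγ, hfactor γ]
    exact div_neg_of_neg_of_pos
      (mul_neg_of_neg_of_pos (by linarith) (hlin γ hγ)) (hden γ hγ)
  have hzero : deriv (f v a b) g = 0 := by
    rw [hderiv g hg0, hfactor g]
    simp
  refine ⟨hg0, hsign_pos, hzero, hsign_neg, ?_⟩
  -- monotonicity / max
  have hcont : ∀ x ∈ Set.Ioi (0:ℝ), ContinuousAt (f v a b) x := by
    intro x hx
    exact (f_hasDerivAt v a b hx).continuousAt
  have hmono : StrictMonoOn (f v a b) (Set.Ioc 0 g) := by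
    apply strictMonoOn_of_deriv_pos (convex_Ioc 0 g)
    · exact fun x hx => (hcont x hx.1).continuousWithinAt
    · intro x hx
      rw [interior_Ioc] at hx
      exact hsign_pos x hx.1 hx.2
  have hanti : StrictAntiOn (f v a b) (Set.Ici g) := by
    apply strictAntiOn_of_deriv_neg (convex_Ici g)
    · exact fun x hx => (hcont x (lt_of_lt_of_le hg0 hx)).continuousWithinAt
    · intro x hx
      rw [interior_Ici] at hx
      exact hsign_neg x hx
  intro γ hγ hne
  rcases lt_or_gt_of_ne hne with h | h
  · exact hmono ⟨hγ, h.le⟩ ⟨hg0, le_refl g⟩ h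
  · exact hanti (le_refl g) h.le h
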